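/- For every pointed Kripke model M,w in which every accessibility relation R_a is reflexive, there exists a pointed Kripke model N,w' in which every accessibility relation is an equivalence relation such that M,w is agent-nonrepeating bisimilar to N,w'. Consequently, the logics T and S5 prove exactly the same agent-nonrepeating formulas. -/

import Mathlib

/-- Formulas of the multi-agent modal language: p | ¬φ | (φ ∧ φ) | □_a φ. -/
inductive Fm (A : Type) : Type
  | atom : ℕ → Fm A
  | neg : Fm A → Fm A
  | and : Fm A → Fm A → Fm A
  | box : A → Fm A → Fm A

namespace Fm
def imp {A : Type} (φ ψ : Fm A) : Fm A := .neg (.and φ (.neg ψ))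
def or {A : Type} (φ ψ : Fm A) : Fm A := .neg (.and (.neg φ) (.neg ψ))
def dia {A : Type} (a : A) (φ : Fm A) : Fm A := .neg (.box a (.neg φ))
end Fm

/-- Kripke models with agent set `A` and world type `W`. -/
structure Kripke (A W : Type) where
  R : A → W → W → Prop
  V : ℕ → W → Prop

/-- Satisfaction. -/
def Sat {A W : Type} (M : Kripke A W) : W → Fm A → Prop
  | w, .atom n => M.V n w
  | w, .neg φ => ¬ Sat M w φ
  | w, .and φ ψ => Sat M w φ ∧ Sat M w ψ
  | w, .box a φ => ∀ v, M.R a w v → Sat M v φ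

/-- The fragments L_{-a}: φ ::= p | □_x ψ (x ≠ a, ψ ∈ L_{-x}) | ¬φ | (φ ∧ φ). -/
inductive LMinus {A : Type} : A → Fm A → Prop
  | atom (a : A) (n : ℕ) : LMinus a (.atom n)
  | box {a x : A} {ψ : Fm A} : x ≠ a → LMinus x ψ → LMinus a (.box x ψ)
  | neg {a : A} {φ : Fm A} : LMinus a φ → LMinus a (.neg φ)
  | and {a : A} {φ ψ : Fm A} : LMinus a φ → LMinus a ψ → LMinus a (.and φ ψ)

/-- The agent-alternating fragment L_alt. -/
inductive LAlt {A : Type} : Fm A → Prop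
  | atom (n : ℕ) : LAlt (.atom n)
  | chi {φ : Fm A} (a : A) : LMinus a φ → LAlt φ
  | neg {φ : Fm A} : LAlt φ → LAlt (.neg φ)
  | and {φ ψ : Fm A} : LAlt φ → LAlt ψ → LAlt (.and φ ψ)

/-- The fragments L_X for X ⊆ A: φ ::= p | □_x ψ (x ∈ X, ψ ∈ L_{X\{x}}) | ¬φ | (φ ∧ φ). -/
inductive LX {A : Type} : Set A → Fm A → Prop
  | atom (X : Set A) (n : ℕ) : LX X (.atom n)
  | box {X : Set A} {x : A} {ψ : Fm A} : x ∈ X → LX (X \ {x}) ψ → LX X (.box x ψ)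
  | neg {X : Set A} {φ : Fm A} : LX X φ → LX X (.neg φ)
  | and {X : Set A} {φ ψ : Fm A} : LX X φ → LX X ψ → LX X (.and φ ψ)

/-- Immediate subformula relation. -/
inductive ISub {A : Type} : Fm A → Fm A → Prop
  | neg (φ : Fm A) : ISub φ (.neg φ)
  | andL (φ ψ : Fm A) : ISub φ (.and φ ψ)
  | andR (φ ψ : Fm A) : ISub ψ (.and φ ψ)
  | box (a : A) (φ : Fm A) : ISub φ (.box a φ)

/-- An occurrence type of φ: a nonempty sequence of formulas, each an immediate
subformula of the next, ending in φ. -/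
def IsOcc {A : Type} (l : List (Fm A)) (φ : Fm A) : Prop :=
  l ≠ [] ∧ l.getLast? = some φ ∧ List.Chain' ISub l

/-- A □_a-occurrence of φ. -/
def IsBoxOcc {A : Type} (a : A) (l : List (Fm A)) (φ : Fm A) : Prop :=
  IsOcc l φ ∧ ∃ β, l.head? = some (Fm.box a β)

/-- O ≤ O' iff O' is a suffix of O (prefix-extension order on occurrences). -/
def OccLe {A : Type} (O O' : List (Fm A)) : Prop := O' <:+ O

/-- φ is agent-alternating: between any two nested □_a-occurrences there is a
□_b-occurrence for some b ≠ a. -/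
def AgentAlternating {A : Type} (φ : Fm A) : Prop :=
  ∀ (a : A) (O O' : List (Fm A)), IsBoxOcc a O φ → IsBoxOcc a O' φ → O ≠ O' → OccLe O O' →
    ∃ b : A, b ≠ a ∧ ∃ O'' : List (Fm A), IsBoxOcc b O'' φ ∧ OccLe O O'' ∧ OccLe O'' O'

/-- φ is agent-nonrepeating: no □_a-occurrence lies below another □_a-occurrence. -/
def AgentNonrepeating {A : Type} (φ : Fm A) : Prop :=
  ∀ (a : A) (O O' : List (Fm A)), IsBoxOcc a O φ → IsBoxOcc a O' φ → O ≠ O' → ¬ OccLe O O'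

/-- Boolean evaluation treating atoms and boxed formulas as atomic. -/
def evalP {A : Type} (v : Fm A → Bool) : Fm A → Bool
  | .neg φ => ! evalP v φ
  | .and φ ψ => evalP v φ && evalP v ψ
  | φ => v φ

/-- Propositional tautologies (in the signature ¬, ∧, with boxed formulas atomic). -/
def Taut {A : Type} (φ : Fm A) : Prop := ∀ v : Fm A → Bool, evalP v φ = true

/-- Provability in the smallest normal modal logic containing the axioms `Ax`. -/
inductive Prv {A : Type} (Ax : Fm A → Prop) : Fm A → Prop
  | taut {φ : Fm A} : Taut φ → Prv Ax φ
  | ax {φ : Fm A} : Ax φ → Prv Ax φ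
  | k (a : A) (φ ψ : Fm A) :
      Prv Ax (Fm.imp (.box a (Fm.imp φ ψ)) (Fm.imp (.box a φ) (.box a ψ)))
  | mp {φ ψ : Fm A} : Prv Ax (Fm.imp φ ψ) → Prv Ax φ → Prv Ax ψ
  | nec {φ : Fm A} (a : A) : Prv Ax φ → Prv Ax (.box a φ)

def AxNone {A : Type} : Fm A → Prop := fun _ => False
def AxT {A : Type} : Fm A → Prop := fun χ => ∃ (a : A) (φ : Fm A), χ = Fm.imp (.box a φ) φ
def Ax4 {A : Type} : Fm A → Prop := fun χ => ∃ (a : A) (φ : Fm A), χ = Fm.imp (.box a φ) (.box a (.box a φ))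
def Ax5 {A : Type} : Fm A → Prop := fun χ => ∃ (a : A) (φ : Fm A), χ = Fm.imp (.neg (.box a φ)) (.box a (.neg (.box a φ)))
def AxB {A : Type} : Fm A → Prop := fun χ => ∃ (a : A) (φ : Fm A), χ = Fm.imp φ (.box a (Fm.dia a φ))
def AxD {A : Type} : Fm A → Prop := fun χ => ∃ (a : A) (φ : Fm A), χ = Fm.imp (.box a φ) (Fm.dia a φ)

def Ser {W : Type} (R : W → W → Prop) : Prop := ∀ u, ∃ v, R u v
def Eucl {W : Type} (R : W → W → Prop) : Prop := ∀ u v w, R u v → R u w → R v w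

/-- Agent-alternating bisimulation family (`none` plays the role of `alt`). -/
def IsAAFamily {A W1 W2 : Type} (M : Kripke A W1) (N : Kripke A W2)
    (f : Option A → W1 → W2 → Prop) : Prop :=
  ∀ (o : Option A) (u : W1) (v : W2), f o u v →
    (∀ n, M.V n u ↔ N.V n v) ∧
    (∀ b : A, o ≠ some b →
      (∀ u', M.R b u u' → ∃ v', N.R b v v' ∧ f (some b) u' v') ∧
      (∀ v', N.R b v v' → ∃ u', M.R b u u' ∧ f (some b) u' v'))

/-- Agent-nonrepeating bisimulation family. -/
def IsNRFamily {A W1 W2 : Type} (M : Kripke A W1) (N : Kripke A W2)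
    (f : Set A → W1 → W2 → Prop) : Prop :=
  ∀ (X : Set A) (u : W1) (v : W2), f X u v →
    (∀ n, M.V n u ↔ N.V n v) ∧
    (∀ x ∈ X,
      (∀ u', M.R x u u' → ∃ v', N.R x v v' ∧ f (X \ {x}) u' v') ∧
      (∀ v', N.R x v v' → ∃ u', M.R x u u' ∧ f (X \ {x}) u' v'))

/-- One step in an agent-alternating sequence. -/
def Step {A W : Type} (M : Kripke A W) : (Option A × W) → (Option A × W) → Prop :=
  fun x y => x.1 ≠ y.1 ∧ ∃ b : A, y.1 = some b ∧ M.R b x.2 y.2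

/-- Valid worlds of an agent-alternating unraveling. -/
def ValidSeq {A W : Type} (M : Kripke A W) (s : List (Option A × W)) : Prop :=
  s ≠ [] ∧ (∃ w, s.head? = some (none, w)) ∧ (∀ x ∈ s.tail, x.1 ≠ none) ∧
    List.Chain' (Step M) s

def UWorld {A W : Type} (M : Kripke A W) : Type := {s : List (Option A × W) // ValidSeq M s}

def lastEntry {A W : Type} {M : Kripke A W} (s : UWorld M) : Option A × W :=
  s.val.getLast s.prop.1

/-- N is an agent-alternating unraveling of M. -/
def IsAAUnraveling {A W : Type} (M : Kripke A W) (N : Kripke A (UWorld M)) : Prop :=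
  (∀ (b : A) (s : UWorld M), (lastEntry s).1 ≠ some b →
    ∀ t : UWorld M, N.R b s t ↔ ∃ w', M.R b (lastEntry s).2 w' ∧ t.val = s.val ++ [(some b, w')])
  ∧ (∀ n (s : UWorld M), N.V n s ↔ M.V n (lastEntry s).2)

/-- The canonical relation family between M and any of its agent-alternating unravelings. -/
def PFam {A W : Type} (M : Kripke A W) : Option A → W → UWorld M → Prop :=
  fun o u s => lastEntry s = (o, u)

/-- Finite agent-alternating bisimulation relations: `BisimN M N n (some a)` is ⇆_{-a}^n,
`BisimN M N n none` is ⇆_alt^n. -/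
def BisimN {A W1 W2 : Type} (M : Kripke A W1) (N : Kripke A W2) :
    ℕ → Option A → W1 → W2 → Prop
  | 0, _, u, v => ∀ n, M.V n u ↔ N.V n v
  | (n+1), o, u, v => (∀ m, M.V m u ↔ N.V m v) ∧
      ∀ b : A, o ≠ some b →
        (∀ u', M.R b u u' → ∃ v', N.R b v v' ∧ BisimN M N n (some b) u' v') ∧
        (∀ v', N.R b v v' → ∃ u', M.R b u u' ∧ BisimN M N n (some b) u' v')

/-- Standard n-bisimilarity. -/
def StdBisimN {A W1 W2 : Type} (M : Kripke A W1) (N : Kripke A W2) :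
    ℕ → W1 → W2 → Prop
  | 0, u, v => ∀ n, M.V n u ↔ N.V n v
  | (n+1), u, v => (∀ m, M.V m u ↔ N.V m v) ∧
      ∀ b : A,
        (∀ u', M.R b u u' → ∃ v', N.R b v v' ∧ StdBisimN M N n u' v') ∧
        (∀ v', N.R b v v' → ∃ u', M.R b u u' ∧ StdBisimN M N n u' v')

section Dev
open Classical
variable {A W : Type}

@[simp] lemma evalP_atom (v : Fm A → Bool) (n : ℕ) : evalP v (.atom n) = v (.atom n) := rfl
@[simp] lemma evalP_neg (v : Fm A → Bool) (φ : Fm A) : evalP v (.neg φ) = !evalP v φ := rfl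
@[simp] lemma evalP_and (v : Fm A → Bool) (φ ψ : Fm A) : evalP v (.and φ ψ) = (evalP v φ && evalP v ψ) := rfl
@[simp] lemma evalP_box (v : Fm A → Bool) (a : A) (φ : Fm A) : evalP v (.box a φ) = v (.box a φ) := rfl

lemma sat_imp (M : Kripke A W) (w : W) (φ ψ : Fm A) :
    Sat M w (Fm.imp φ ψ) ↔ (Sat M w φ → Sat M w ψ) := by
  simp [Fm.imp, Sat]

lemma evalP_decide (M : Kripke A W) (w : W) (φ : Fm A) :
    evalP (fun χ => decide (Sat M w χ)) φ = decide (Sat M w φ) := by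
  induction φ with
  | atom n => rfl
  | neg φ ih => rw [Bool.eq_iff_iff]; simp [Sat, ih]; exact (@decide_eq_true_iff _ (_)).symm
  | and φ ψ ih1 ih2 => rw [Bool.eq_iff_iff]; simp [Sat, ih1, ih2]; exact (@decide_eq_true_iff _ (_)).symm
  | box a φ => rfl

lemma taut_sat {M : Kripke A W} {w : W} {φ : Fm A} (h : Taut φ) : Sat M w φ := by
  have := h (fun χ => decide (Sat M w χ))
  rw [evalP_decide] at this
  exact of_decide_eq_true this

lemma sound {Ax : Fm A → Prop} {φ : Fm A} (h : Prv Ax φ) (M : Kripke A W)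
    (hax : ∀ χ, Ax χ → ∀ u : W, Sat M u χ) : ∀ w : W, Sat M w φ := by
  induction h with
  | taut ht => exact fun w => taut_sat ht
  | ax ha => exact hax _ ha
  | k a φ ψ =>
      intro w
      rw [sat_imp]; intro h1; rw [sat_imp]; intro h2
      intro v hv
      exact (sat_imp M v φ ψ).1 (h1 v hv) (h2 v hv)
  | mp h1 h2 ih1 ih2 => exact fun w => (sat_imp ..).1 (ih1 w) (ih2 w)
  | nec a h ih => exact fun w v hv => ih v

end Dev
section Syn
variable {A : Type}

def Fm.top : Fm A := Fm.imp (.atom 0) (.atom 0)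

def conjF : List (Fm A) → Fm A
  | [] => Fm.top
  | φ :: l => .and φ (conjF l)

@[simp] lemma evalP_top (v : Fm A → Bool) : evalP v Fm.top = true := by
  simp [Fm.top, Fm.imp]

@[simp] lemma evalP_imp (v : Fm A → Bool) (φ ψ : Fm A) :
    evalP v (Fm.imp φ ψ) = (!evalP v φ || evalP v ψ) := by
  show (!(evalP v φ && !evalP v ψ)) = _
  cases evalP v φ <;> cases evalP v ψ <;> rfl

@[simp] lemma evalP_conj (v : Fm A → Bool) (l : List (Fm A)) :
    evalP v (conjF l) = l.all (evalP v) := by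
  induction l with
  | nil => simp [conjF]
  | cons a l ih => simp [conjF, ih]

lemma prv_mono {Ax Ax' : Fm A → Prop} (h : ∀ χ, Ax χ → Ax' χ) {φ : Fm A}
    (hp : Prv Ax φ) : Prv Ax' φ := by
  induction hp with
  | taut ht => exact .taut ht
  | ax ha => exact .ax (h _ ha)
  | k a φ ψ => exact .k a φ ψ
  | mp _ _ ih1 ih2 => exact .mp ih1 ih2
  | nec a _ ih => exact .nec a ih

variable {Ax : Fm A → Prop}

lemma prv_mp1 {φ ψ : Fm A} (t : Taut (Fm.imp φ ψ)) (h : Prv Ax φ) : Prv Ax ψ :=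
  .mp (.taut t) h

lemma prv_mp2 {φ ψ χ : Fm A} (t : Taut (Fm.imp φ (Fm.imp ψ χ)))
    (h1 : Prv Ax φ) (h2 : Prv Ax ψ) : Prv Ax χ :=
  .mp (.mp (.taut t) h1) h2

lemma prv_top : Prv Ax (Fm.top (A := A)) := .taut (fun v => by simp)

lemma prv_imp_of {B C : Fm A} (h : Prv Ax B) : Prv Ax (Fm.imp C B) :=
  prv_mp1 (fun v => by
    simp only [evalP_imp]
    cases evalP v C <;> cases evalP v B <;> rfl) h

lemma boxConj {a : A} {l : List (Fm A)} {φ : Fm A}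
    (h : Prv Ax (Fm.imp (conjF l) φ)) :
    Prv Ax (Fm.imp (conjF (l.map (Fm.box a))) (Fm.box a φ)) := by
  induction l generalizing φ with
  | nil =>
      have hφ : Prv Ax φ := .mp h (.taut (fun v => by simp [conjF]))
      exact prv_imp_of (.nec a hφ)
  | cons ψ l ih =>
      have h2 : Prv Ax (Fm.imp (conjF l) (Fm.imp ψ φ)) := by
        refine prv_mp1 (fun v => ?_) h
        simp only [evalP_imp, evalP_and, evalP_conj, List.all_cons, conjF]
        cases evalP v ψ <;> cases evalP v φ <;> cases l.all (evalP v) <;> rfl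
      have h3 := ih h2
      have h4 := Prv.k (Ax := Ax) a ψ φ
      show Prv Ax (Fm.imp (.and (.box a ψ) (conjF (l.map (Fm.box a)))) (.box a φ))
      refine prv_mp2 (fun v => ?_) h3 h4
      simp only [evalP_imp, evalP_and, evalP_conj, evalP_box, conjF]
      cases (l.map (Fm.box a)).all (evalP v) <;>
        cases v (Fm.box a (Fm.imp ψ φ)) <;>
        cases v (Fm.box a ψ) <;> cases v (Fm.box a φ) <;> rfl

end Syn
section MCSsec
open scoped Classical
variable {A : Type} {Ax : Fm A → Prop}

def ConS (Ax : Fm A → Prop) (S : Set (Fm A)) : Prop :=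
  ¬ ∃ l : List (Fm A), (∀ ψ ∈ l, ψ ∈ S) ∧ Prv Ax (Fm.neg (conjF l))

def MCS (Ax : Fm A → Prop) (S : Set (Fm A)) : Prop :=
  ConS Ax S ∧ ∀ φ, φ ∈ S ∨ Fm.neg φ ∈ S

lemma not_con {S : Set (Fm A)} (h : ¬ ConS Ax S) :
    ∃ l : List (Fm A), (∀ ψ ∈ l, ψ ∈ S) ∧ Prv Ax (Fm.neg (conjF l)) :=
  not_not.mp h

lemma imp_of_refut {l l' : List (Fm A)} {φ : Fm A}
    (hmem : ∀ ψ ∈ l, ψ ∈ l' ∨ ψ = φ)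
    (hp : Prv Ax (Fm.neg (conjF l))) :
    Prv Ax (Fm.imp φ (Fm.neg (conjF l'))) := by
  refine prv_mp1 (fun v => ?_) hp
  simp only [evalP_imp, evalP_neg, evalP_conj]
  cases hb : evalP v φ
  · cases l.all (evalP v) <;> rfl
  · cases hy : l'.all (evalP v)
    · cases l.all (evalP v) <;> rfl
    · have hx : l.all (evalP v) = true := by
        rw [List.all_eq_true] at hy ⊢
        intro ψ hψ
        rcases hmem ψ hψ with h | h
        · exact hy _ h
        · rw [h]; exact hb
      rw [hx]; rfl

lemma refut_of_two {l1 l2 : List (Fm A)} {φ : Fm A}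
    (h1 : Prv Ax (Fm.imp φ (Fm.neg (conjF l1))))
    (h2 : Prv Ax (Fm.imp (Fm.neg φ) (Fm.neg (conjF l2)))) :
    Prv Ax (Fm.neg (conjF (l1 ++ l2))) := by
  refine prv_mp2 (fun v => ?_) h1 h2
  simp only [evalP_imp, evalP_neg, evalP_conj, List.all_append]
  cases evalP v φ <;> cases l1.all (evalP v) <;> cases l2.all (evalP v) <;> rfl

lemma con_insert_or {S : Set (Fm A)} (h : ConS Ax S) (φ : Fm A) :
    ConS Ax (insert φ S) ∨ ConS Ax (insert (Fm.neg φ) S) := by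
  by_contra hc
  push_neg at hc
  obtain ⟨l1, hl1, hp1⟩ := not_con hc.1
  obtain ⟨l2, hl2, hp2⟩ := not_con hc.2
  set l1' := l1.filter (fun ψ => decide (ψ ≠ φ)) with hl1'def
  set l2' := l2.filter (fun ψ => decide (ψ ≠ Fm.neg φ)) with hl2'def
  have m1 : ∀ ψ ∈ l1, ψ ∈ l1' ∨ ψ = φ := by
    intro ψ hψ
    by_cases he : ψ = φ
    · exact Or.inr he
    · exact Or.inl (List.mem_filter.2 ⟨hψ, by simp [he]⟩)
  have m2 : ∀ ψ ∈ l2, ψ ∈ l2' ∨ ψ = Fm.neg φ := by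
    intro ψ hψ
    by_cases he : ψ = Fm.neg φ
    · exact Or.inr he
    · exact Or.inl (List.mem_filter.2 ⟨hψ, by simp [he]⟩)
  have h1 := imp_of_refut m1 hp1
  have h2 := imp_of_refut m2 hp2
  refine h ⟨l1' ++ l2', ?_, refut_of_two h1 h2⟩
  intro ψ hψ
  rcases List.mem_append.1 hψ with h' | h'
  · have := List.mem_filter.1 h'
    rcases hl1 ψ this.1 with h'' | h''
    · exact absurd h'' (by simpa using this.2)
    · exact h''
  · have := List.mem_filter.1 h'
    rcases hl2 ψ this.1 with h'' | h''
    · exact absurd h'' (by simpa using this.2)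
    · exact h''

lemma chain_list {c : Set (Set (Fm A))} (hc : IsChain (· ⊆ ·) c) (hne : c.Nonempty)
    (l : List (Fm A)) (h : ∀ ψ ∈ l, ψ ∈ ⋃₀ c) : ∃ T ∈ c, ∀ ψ ∈ l, ψ ∈ T := by
  induction l with
  | nil => exact ⟨hne.choose, hne.choose_spec, by simp⟩
  | cons a l ih =>
      obtain ⟨T, hT, hTl⟩ := ih (fun ψ hψ => h ψ (List.mem_cons_of_mem _ hψ))
      obtain ⟨U, hU, haU⟩ := h a List.mem_cons_self
      rcases eq_or_ne T U with rfl | hne'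
      · exact ⟨T, hT, fun ψ hψ => by
          rcases List.mem_cons.1 hψ with rfl | h' 
          exacts [haU, hTl ψ h']⟩
      · rcases hc hT hU hne' with hTU | hUT
        · exact ⟨U, hU, fun ψ hψ => by
            rcases List.mem_cons.1 hψ with rfl | h'
            exacts [haU, hTU (hTl ψ h')]⟩
        · exact ⟨T, hT, fun ψ hψ => by
            rcases List.mem_cons.1 hψ with rfl | h'
            exacts [hUT haU, hTl ψ h']⟩

lemma lindenbaum {S : Set (Fm A)} (h : ConS Ax S) : ∃ T, S ⊆ T ∧ MCS Ax T := by
  obtain ⟨T, hST, hTmem, hTmax⟩ :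
      ∃ T, S ⊆ T ∧ T ∈ {U : Set (Fm A) | ConS Ax U} ∧
        ∀ U ∈ {U : Set (Fm A) | ConS Ax U}, T ⊆ U → U = T := by
    obtain ⟨T, hST, hmax⟩ := zorn_subset_nonempty {U : Set (Fm A) | ConS Ax U}
      (fun c hcS hchain hcne => by
        refine ⟨⋃₀ c, ?_, fun s hs => Set.subset_sUnion_of_mem hs⟩
        rintro ⟨l, hl, hp⟩
        obtain ⟨T, hT, hTl⟩ := chain_list hchain hcne l hl
        exact hcS hT ⟨l, hTl, hp⟩) S h
    exact ⟨T, hST, hmax.1, fun U hU hTU => (hmax.2 hU hTU).antisymm hTU⟩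
  refine ⟨T, hST, hTmem, fun φ => ?_⟩
  rcases con_insert_or hTmem φ with hc | hc
  · left
    have := hTmax _ hc (Set.subset_insert _ _)
    rw [← this]; exact Set.mem_insert _ _
  · right
    have := hTmax _ hc (Set.subset_insert _ _)
    rw [← this]; exact Set.mem_insert _ _

variable {Γ : Set (Fm A)}

lemma mcs_not_both (hΓ : MCS Ax Γ) {φ : Fm A} (h1 : φ ∈ Γ) (h2 : Fm.neg φ ∈ Γ) : False := by
  refine hΓ.1 ⟨[φ, Fm.neg φ], ?_, .taut (fun v => ?_)⟩
  · intro ψ hψ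
    rcases List.mem_cons.1 hψ with rfl | hψ
    · exact h1
    · rcases List.mem_cons.1 hψ with rfl | hψ
      · exact h2
      · simp at hψ
  · simp only [evalP_neg, evalP_conj, List.all_cons, List.all_nil]
    cases evalP v φ <;> rfl

lemma mcs_prv (hΓ : MCS Ax Γ) {φ : Fm A} (h : Prv Ax φ) : φ ∈ Γ := by
  rcases hΓ.2 φ with h' | h'
  · exact h'
  exfalso
  refine hΓ.1 ⟨[Fm.neg φ], ?_, prv_mp1 (fun v => ?_) h⟩
  · intro ψ hψ; simp at hψ; rw [hψ]; exact h'
  · simp only [evalP_imp, evalP_neg, evalP_conj, List.all_cons, List.all_nil]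
    cases evalP v φ <;> rfl

lemma mcs_mp (hΓ : MCS Ax Γ) {φ ψ : Fm A} (h1 : φ ∈ Γ) (h2 : Fm.imp φ ψ ∈ Γ) : ψ ∈ Γ := by
  rcases hΓ.2 ψ with h | h
  · exact h
  exfalso
  refine hΓ.1 ⟨[φ, Fm.imp φ ψ, Fm.neg ψ], ?_, .taut (fun v => ?_)⟩
  · intro χ hχ
    simp only [List.mem_cons, List.not_mem_nil, or_false] at hχ
    rcases hχ with rfl | rfl | rfl
    exacts [h1, h2, h]
  · simp only [evalP_neg, evalP_conj, List.all_cons, List.all_nil, evalP_imp]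
    cases evalP v φ <;> cases evalP v ψ <;> rfl

lemma mcs_neg_iff (hΓ : MCS Ax Γ) {φ : Fm A} : Fm.neg φ ∈ Γ ↔ φ ∉ Γ :=
  ⟨fun h h' => mcs_not_both hΓ h' h, fun h => (hΓ.2 φ).resolve_left h⟩

lemma mcs_and_iff (hΓ : MCS Ax Γ) {φ ψ : Fm A} :
    Fm.and φ ψ ∈ Γ ↔ φ ∈ Γ ∧ ψ ∈ Γ := by
  constructor
  · intro h
    constructor
    · refine mcs_mp hΓ h (mcs_prv hΓ (.taut (fun v => ?_)))
      simp only [evalP_imp, evalP_and]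
      cases evalP v φ <;> cases evalP v ψ <;> rfl
    · refine mcs_mp hΓ h (mcs_prv hΓ (.taut (fun v => ?_)))
      simp only [evalP_imp, evalP_and]
      cases evalP v φ <;> cases evalP v ψ <;> rfl
  · rintro ⟨h1, h2⟩
    refine mcs_mp hΓ h2 (mcs_mp hΓ h1 (mcs_prv hΓ (.taut (fun v => ?_))))
    simp only [evalP_imp, evalP_and]
    cases evalP v φ <;> cases evalP v ψ <;> rfl

/-- Canonical model -/
def CanW (Ax : Fm A → Prop) : Type := {Γ : Set (Fm A) // MCS Ax Γ}

def CanM (Ax : Fm A → Prop) : Kripke A (CanW Ax) where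
  R a Γ Δ := ∀ ψ, Fm.box a ψ ∈ Γ.1 → ψ ∈ Δ.1
  V n Γ := Fm.atom n ∈ Γ.1

lemma imp_of_refut2 {l l' : List (Fm A)} {φ : Fm A}
    (hmem : ∀ ψ ∈ l, ψ ∈ l' ∨ ψ = Fm.neg φ)
    (hp : Prv Ax (Fm.neg (conjF l))) :
    Prv Ax (Fm.imp (conjF l') φ) := by
  refine prv_mp1 (fun v => ?_) hp
  simp only [evalP_imp, evalP_neg, evalP_conj]
  cases hb : evalP v φ
  · cases hy : l'.all (evalP v)
    · cases l.all (evalP v) <;> rfl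
    · have hx : l.all (evalP v) = true := by
        rw [List.all_eq_true] at hy ⊢
        intro ψ hψ
        rcases hmem ψ hψ with h | h
        · exact hy _ h
        · rw [h]; show (!evalP v φ) = true; rw [hb]; rfl
      rw [hx]; rfl
  · cases l.all (evalP v) <;> cases l'.all (evalP v) <;> rfl

lemma refut_cons_neg {lc : List (Fm A)} {X : Fm A}
    (h : Prv Ax (Fm.imp (conjF lc) X)) :
    Prv Ax (Fm.neg (conjF (Fm.neg X :: lc))) := by
  refine prv_mp1 (fun v => ?_) h
  simp only [evalP_imp, evalP_neg, evalP_conj, List.all_cons]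
  cases evalP v X <;> cases lc.all (evalP v) <;> rfl

lemma can_exists {Γ : CanW Ax} {a : A} {φ : Fm A} (h : Fm.box a φ ∉ Γ.1) :
    ∃ Δ : CanW Ax, (CanM Ax).R a Γ Δ ∧ φ ∉ Δ.1 := by
  have hcon : ConS Ax ({ψ | Fm.box a ψ ∈ Γ.1} ∪ {Fm.neg φ}) := by
    rintro ⟨l, hl, hp⟩
    set l' := l.filter (fun ψ => decide (ψ ≠ Fm.neg φ)) with hl'def
    have m : ∀ ψ ∈ l, ψ ∈ l' ∨ ψ = Fm.neg φ := by
      intro ψ hψ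
      by_cases he : ψ = Fm.neg φ
      · exact Or.inr he
      · exact Or.inl (List.mem_filter.2 ⟨hψ, by simp [he]⟩)
    have h1 := imp_of_refut2 m hp
    have h2 := boxConj (a := a) h1
    have h3 := refut_cons_neg h2
    refine Γ.2.1 ⟨Fm.neg (Fm.box a φ) :: l'.map (Fm.box a), ?_, h3⟩
    intro ψ hψ
    rcases List.mem_cons.1 hψ with rfl | hψ
    · exact (mcs_neg_iff Γ.2).2 h
    · obtain ⟨χ, hχ, rfl⟩ := List.mem_map.1 hψ
      have hm := List.mem_filter.1 hχ
      rcases hl χ hm.1 with h' | h'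
      · exact h'
      · exact absurd h' (by simpa using hm.2)
  obtain ⟨T, hST, hmcs⟩ := lindenbaum hcon
  refine ⟨⟨T, hmcs⟩, fun ψ hψ => hST (Or.inl hψ), fun hφ => ?_⟩
  exact mcs_not_both hmcs hφ (hST (Or.inr rfl))

lemma truth_lemma (φ : Fm A) : ∀ Γ : CanW Ax, Sat (CanM Ax) Γ φ ↔ φ ∈ Γ.1 := by
  induction φ with
  | atom n => exact fun Γ => Iff.rfl
  | neg φ ih =>
      intro Γ
      show (¬ Sat (CanM Ax) Γ φ) ↔ _
      rw [ih Γ, ← mcs_neg_iff Γ.2]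
  | and φ ψ ih1 ih2 =>
      intro Γ
      show (Sat (CanM Ax) Γ φ ∧ Sat (CanM Ax) Γ ψ) ↔ _
      rw [ih1 Γ, ih2 Γ, mcs_and_iff Γ.2]
  | box a φ ih =>
      intro Γ
      constructor
      · intro h
        by_contra hb
        obtain ⟨Δ, hR, hφ⟩ := can_exists hb
        exact hφ ((ih Δ).1 (h Δ hR))
      · intro h Δ hR
        exact (ih Δ).2 (hR φ h)

lemma can_refl (hT : ∀ a : A, ∀ φ : Fm A, Ax (Fm.imp (.box a φ) φ)) :
    ∀ a, Reflexive ((CanM Ax).R a) :=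
  fun a Γ ψ h => mcs_mp Γ.2 h (mcs_prv Γ.2 (.ax (hT a ψ)))

lemma completeness {φ : Fm A} (h : ¬ Prv Ax φ) :
    ∃ Γ : CanW Ax, ¬ Sat (CanM Ax) Γ φ := by
  have hcon : ConS Ax {Fm.neg φ} := by
    rintro ⟨l, hl, hp⟩
    apply h
    refine prv_mp1 (fun v => ?_) hp
    simp only [evalP_imp, evalP_neg, evalP_conj]
    cases hb : evalP v φ
    · have hx : l.all (evalP v) = true := by
        rw [List.all_eq_true]
        intro ψ hψ
        have := hl ψ hψ
        simp only [Set.mem_singleton_iff] at this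
        rw [this]; show (!evalP v φ) = true; rw [hb]; rfl
      rw [hx]; rfl
    · cases l.all (evalP v) <;> rfl
  obtain ⟨T, hS, hmcs⟩ := lindenbaum hcon
  refine ⟨⟨T, hmcs⟩, ?_⟩
  exact fun hs => (mcs_neg_iff hmcs).1 (hS rfl) ((truth_lemma φ ⟨T, hmcs⟩).1 hs)

end MCSsec
section Part1
open scoped Classical
variable {A W : Type}

/-- drop the last entry if its agent is `a` -/
noncomputable def pmap (a : A) (s : List (Option A × W)) : List (Option A × W) :=
  if (s.getLast?).map Prod.fst = some (some a) then s.dropLast else s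

lemma part1 (M : Kripke A W) (w : W) (hrefl : ∀ a : A, Reflexive (M.R a)) :
    ∃ (W' : Type) (N : Kripke A W') (w' : W'),
      (∀ a : A, Equivalence (N.R a)) ∧
      ∃ f : Set A → W → W' → Prop, IsNRFamily M N f ∧ f Set.univ w w' := by
  refine ⟨UWorld M,
    { R := fun a s t => pmap a s.1 = pmap a t.1
      V := fun n s => M.V n ((s.1.getLast?.map Prod.snd).getD w) }, ?_, ?_, ?_⟩
  · exact ⟨[(none, w)], by
      refine ⟨by simp, ⟨w, rfl⟩, by simp, ?_⟩
      exact List.isChain_singleton _⟩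
  · exact fun a => ⟨fun s => rfl, Eq.symm, Eq.trans⟩
  refine ⟨fun X u s => s.1.getLast?.map Prod.snd = some u ∧
      ∀ p ∈ s.1, ∀ x ∈ X, p.1 ≠ some x, ?_, ?_, ?_⟩
  · -- IsNRFamily
    rintro X u s ⟨h1, h2⟩
    have hne : s.1 ≠ [] := s.2.1
    have hlast : s.1.getLast? = some (s.1.getLast hne) := List.getLast?_eq_getLast hne
    have hlastmem : s.1.getLast hne ∈ s.1 := List.getLast_mem hne
    have hu : (s.1.getLast hne).2 = u := by
      rw [hlast] at h1; simpa using h1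
    constructor
    · intro n
      show M.V n u ↔ M.V n ((s.1.getLast?.map Prod.snd).getD w)
      rw [h1]; rfl
    intro x hx
    have hnotx : (s.1.getLast hne).1 ≠ some x := h2 _ hlastmem x hx
    have hps : pmap x s.1 = s.1 := by
      rw [pmap, if_neg]
      rw [hlast]
      simpa using hnotx
    constructor
    · -- forth
      intro u' hu'
      have hstep : Step M (s.1.getLast hne) (some x, u') :=
        ⟨hnotx, x, rfl, by rw [hu]; exact hu'⟩
      have hvalid : ValidSeq M (s.1 ++ [(some x, u')]) := by
        obtain ⟨_, ⟨w0, hw0⟩, htl, hch⟩ := s.2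
        refine ⟨by simp, ⟨w0, by rw [List.head?_append, hw0]; rfl⟩, ?_, ?_⟩
        · rw [List.tail_append_of_ne_nil hne]
          intro p hp
          rcases List.mem_append.1 hp with hp | hp
          · exact htl p hp
          · simp at hp; rw [hp]; simp
        · show List.IsChain (Step M) _
          rw [List.isChain_append]
          refine ⟨hch, List.isChain_singleton _, ?_⟩
          intro p hp q hq
          rw [hlast] at hp
          simp only [Option.mem_def, Option.some.injEq, List.head?_cons] at hp hq
          subst hp
          subst hq
          exact hstep
      refine ⟨⟨s.1 ++ [(some x, u')], hvalid⟩, ?_, ?_, ?_⟩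
      · show pmap x s.1 = pmap x (s.1 ++ [(some x, u')])
        rw [hps, pmap, if_pos (by rw [List.getLast?_concat]; rfl)]
        simp
      · rw [List.getLast?_concat]; rfl
      · intro p hp y hy
        rcases List.mem_append.1 hp with hp | hp
        · exact h2 p hp y hy.1
        · simp at hp; rw [hp]
          simp only [ne_eq, Option.some.injEq]
          rintro rfl
          exact hy.2 rfl
    · -- back
      intro t ht
      have ht' : pmap x t.1 = s.1 := by
        have : pmap x s.1 = pmap x t.1 := ht
        rw [hps] at this; exact this.symm
      by_cases hc : (t.1.getLast?).map Prod.fst = some (some x)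
      · -- t = s ++ [(some x, v)]
        have htne : t.1 ≠ [] := t.2.1
        have htlast : t.1.getLast? = some (t.1.getLast htne) := List.getLast?_eq_getLast htne
        have hfst : (t.1.getLast htne).1 = some x := by
          rw [htlast] at hc; simpa using hc
        have hdrop : t.1.dropLast = s.1 := by
          rw [pmap, if_pos hc] at ht'; exact ht'
        have hteq : t.1 = s.1 ++ [t.1.getLast htne] := by
          conv_lhs => rw [← List.dropLast_append_getLast htne]
          rw [hdrop]
        have hch : List.IsChain (Step M) t.1 := t.2.2.2.2
        rw [hteq, List.isChain_append] at hch
        have hstep : Step M (s.1.getLast hne) (t.1.getLast htne) := by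
          refine hch.2.2 _ ?_ _ ?_
          · rw [hlast]; rfl
          · rfl
        obtain ⟨_, b, hb, hR⟩ := hstep
        have hbx : b = x := by
          rw [hb] at hfst; exact Option.some.inj hfst
        refine ⟨(t.1.getLast htne).2, ?_, ?_, ?_⟩
        · rw [← hu, ← hbx]; exact hR
        · rw [htlast]; rfl
        · intro p hp y hy
          rw [hteq] at hp
          rcases List.mem_append.1 hp with hp | hp
          · exact h2 p hp y hy.1
          · simp at hp; rw [hp, hfst]
            simp only [ne_eq, Option.some.injEq]
            rintro rfl
            exact hy.2 rfl
      · -- t = s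
        have hts : t.1 = s.1 := by
          rw [pmap, if_neg hc] at ht'; exact ht'
        have : t = s := Subtype.ext hts
        subst this
        exact ⟨u, hrefl x u, h1, fun p hp y hy => h2 p hp y hy.1⟩
  · -- root: last entry is w
    rfl
  · -- root: no agents used
    intro p hp x _
    have hp' : p = (none, w) := by simpa using hp
    rw [hp']
    simp

end Part1
section Final
variable {A : Type}

lemma nr_invariance {W1 W2 : Type} {M : Kripke A W1} {N : Kripke A W2}
    {f : Set A → W1 → W2 → Prop} (hf : IsNRFamily M N f)
    {X : Set A} {φ : Fm A} (hφ : LX X φ) :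
    ∀ u v, f X u v → (Sat M u φ ↔ Sat N v φ) := by
  induction hφ with
  | atom X n => exact fun u v h => (hf X u v h).1 n
  | @box X x ψ hx hψ ih =>
      intro u v h
      constructor
      · intro hs v' hv'
        obtain ⟨u', hu', hf'⟩ := ((hf X u v h).2 x hx).2 v' hv'
        exact (ih u' v' hf').1 (hs u' hu')
      · intro hs u' hu'
        obtain ⟨v', hv', hf'⟩ := ((hf X u v h).2 x hx).1 u' hu'
        exact (ih u' v' hf').2 (hs v' hv')
  | neg hφ ih =>
      intro u v h
      exact not_congr (ih u v h)
  | and hφ hψ ih1 ih2 =>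
      intro u v h
      exact and_congr (ih1 u v h) (ih2 u v h)

/-- every reflexive pointed model is agent-nonrepeating bisimilar to a partition
model; hence T = S5 on agent-nonrepeating formulas. -/
theorem stmt10 {A : Type} (hA : ∃ a b : A, a ≠ b) :
    (∀ (W : Type) (M : Kripke A W) (w : W), (∀ a : A, Reflexive (M.R a)) →
      ∃ (W' : Type) (N : Kripke A W') (w' : W'),
        (∀ a : A, Equivalence (N.R a)) ∧
        ∃ f : Set A → W → W' → Prop, IsNRFamily M N f ∧ f Set.univ w w') ∧
    (∀ φ : Fm A, LX (Set.univ : Set A) φ →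
      (Prv AxT φ ↔ Prv (fun χ => AxT χ ∨ Ax5 χ) φ)) := by
  constructor
  · exact fun W M w hrefl => part1 M w hrefl
  · intro φ hφ
    constructor
    · exact fun h => prv_mono (fun χ h' => Or.inl h') h
    · intro h5
      by_contra hT
      obtain ⟨Γ, hΓ⟩ := completeness hT
      have hrefl : ∀ a : A, Reflexive ((CanM AxT).R a) :=
        can_refl (fun a ψ => ⟨a, ψ, rfl⟩)
      obtain ⟨W', N, w', hEq, f, hf, hfw⟩ := part1 (CanM AxT) Γ hrefl
      have hinv := nr_invariance hf hφ Γ w' hfw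
      have hsatN : Sat N w' φ := by
        refine sound h5 N ?_ w'
        rintro χ (⟨a, ψ, rfl⟩ | ⟨a, ψ, rfl⟩) u
        · rw [sat_imp]
          exact fun h => h u ((hEq a).refl u)
        · rw [sat_imp]
          intro h v hv
          show ¬ _
          intro hb
          apply h
          intro z hz
          exact hb z ((hEq a).trans ((hEq a).symm hv) hz)
      exact hΓ (hinv.2 hsatN)

end Final
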